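/- Let $\Omega = \begin{pmatrix} A & \omega \\ \omega^\dagger & B \end{pmatrix}$ be a positive semidefinite Hermitian block matrix with $\mathrm{Tr}(\Omega) = 2R$, where $\omega \in \mathbb{C}^{m \times n}$. Then the trace norm of the off-diagonal block satisfies $\|\omega\|_1 \le R$, and $\operatorname{rank}(\omega) \le \operatorname{rank}(\Omega)$. -/

import Mathlib

open Matrix ComplexOrder

/-- The positive semidefinite square root of a positive semidefinite matrix
(the definition of `Matrix.PosSemidef.sqrt` in the older Mathlib, since removed). -/
noncomputable def Matrix.PosSemidef.sqrt {n : Type*} [Fintype n] [DecidableEq n] {A : Matrix n n ℂ}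
    (hA : A.PosSemidef) : Matrix n n ℂ :=
  hA.1.eigenvectorUnitary.1 * diagonal ((↑) ∘ (√·) ∘ hA.1.eigenvalues) *
  (star hA.1.eigenvectorUnitary : Matrix n n ℂ)

lemma Matrix.IsHermitian.spectral_theorem' {n : Type*} [Fintype n] [DecidableEq n]
    {A : Matrix n n ℂ} (hA : A.IsHermitian) :
    A = (hA.eigenvectorUnitary : Matrix n n ℂ) * diagonal (Complex.ofReal ∘ hA.eigenvalues) *
      star (hA.eigenvectorUnitary : Matrix n n ℂ) :=
  hA.spectral_theorem.trans (Unitary.conjStarAlgAut_apply _ _)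

lemma Matrix.PosSemidef.posSemidef_sqrt {n : Type*} [Fintype n] [DecidableEq n]
    {A : Matrix n n ℂ} (hA : A.PosSemidef) : hA.sqrt.PosSemidef := by
  unfold Matrix.PosSemidef.sqrt
  rw [star_eq_conjTranspose]
  refine Matrix.PosSemidef.mul_mul_conjTranspose_same (Matrix.PosSemidef.diagonal ?_) _
  intro i
  simp only [Function.comp_apply, Pi.zero_apply]
  exact_mod_cast Real.sqrt_nonneg _

lemma Matrix.PosSemidef.sqrt_mul_self {n : Type*} [Fintype n] [DecidableEq n]
    {A : Matrix n n ℂ} (hA : A.PosSemidef) : hA.sqrt * hA.sqrt = A := by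
  unfold Matrix.PosSemidef.sqrt
  conv_rhs => rw [hA.1.spectral_theorem']
  have hU : (star hA.1.eigenvectorUnitary : Matrix n n ℂ) * hA.1.eigenvectorUnitary.1 = 1 :=
    Unitary.coe_star_mul_self _
  simp only [Matrix.mul_assoc]
  rw [← Matrix.mul_assoc (star _ : Matrix n n ℂ), hU, Matrix.one_mul,
    ← Matrix.mul_assoc (diagonal _), diagonal_mul_diagonal]
  congr 3
  funext i
  simp only [Function.comp_apply]
  rw [← Complex.ofReal_mul, Real.mul_self_sqrt (hA.eigenvalues_nonneg i)]

/-- The trace norm `‖ω‖₁ = Tr √(ω ωᴴ)` of a complex matrix. -/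
noncomputable def traceNorm (m n : ℕ) (ω : Matrix (Fin m) (Fin n) ℂ) : ℝ :=
  ((posSemidef_self_mul_conjTranspose ω).sqrt.trace).re

private lemma trace_nonneg_of_psd {ι : Type*} [Fintype ι] [DecidableEq ι]
    {M : Matrix ι ι ℂ} (hM : M.PosSemidef) :
    0 ≤ M.trace := by
  exact hM.trace_nonneg

private lemma trace_fromBlocks' {p q : ℕ} (P11 : Matrix (Fin p) (Fin p) ℂ)
    (P12 : Matrix (Fin p) (Fin q) ℂ) (P21 : Matrix (Fin q) (Fin p) ℂ)
    (P22 : Matrix (Fin q) (Fin q) ℂ) :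
    (fromBlocks P11 P12 P21 P22).trace = P11.trace + P22.trace := by
  simp [Matrix.trace, Fintype.sum_sum_type, fromBlocks]

set_option maxHeartbeats 2000000 in
/-- If a PSD block matrix `Ω = [[A, ω],[ωᴴ, B]]` has trace `2R`, then the off-diagonal
block satisfies `‖ω‖₁ ≤ R` and `rank ω ≤ rank Ω`. -/
theorem stmt_5 (m n : ℕ) (R : ℝ)
    (A : Matrix (Fin m) (Fin m) ℂ) (B : Matrix (Fin n) (Fin n) ℂ)
    (ω : Matrix (Fin m) (Fin n) ℂ)
    (hpsd : (fromBlocks A ω ωᴴ B).PosSemidef)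
    (htr : (fromBlocks A ω ωᴴ B).trace = (2 * R : ℝ)) :
    traceNorm m n ω ≤ R ∧ ω.rank ≤ (fromBlocks A ω ωᴴ B).rank := by
  classical
  constructor
  · -- trace norm bound
    have hω := posSemidef_self_mul_conjTranspose ω
    set H := hω.sqrt with hHdef
    have hH : H.PosSemidef := hω.posSemidef_sqrt
    have hHH : H * H = ω * ωᴴ := hω.sqrt_mul_self
    have hHerm : H.IsHermitian := hH.1
    set V : Matrix (Fin m) (Fin m) ℂ := (hHerm.eigenvectorUnitary : Matrix (Fin m) (Fin m) ℂ)
      with hV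
    have hVV : star V * V = 1 := by
      rw [hV]; exact_mod_cast Unitary.coe_star_mul_self hHerm.eigenvectorUnitary
    set e := hHerm.eigenvalues with he
    set D : (Fin m → ℝ) → Matrix (Fin m) (Fin m) ℂ :=
      fun f => V * diagonal (Complex.ofReal ∘ f) * star V with hD
    have hspec : H = D e := hHerm.spectral_theorem'
    have hDmul : ∀ f g, D f * D g = D (fun i => f i * g i) := by
      intro f g
      have h1 : (fun i => ((f i : ℂ) * (g i : ℂ))) = Complex.ofReal ∘ fun i => f i * g i := by
        funext i; simp
      simp only [hD, Matrix.mul_assoc]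
      rw [← Matrix.mul_assoc (star V) V, hVV, Matrix.one_mul,
        ← Matrix.mul_assoc (diagonal _), diagonal_mul_diagonal]
      simp only [Function.comp_apply]
      rw [h1]
    have hDherm : ∀ f, (D f)ᴴ = D f := by
      intro f
      have h1 : star (Complex.ofReal ∘ f) = Complex.ofReal ∘ f := by
        funext i; simp [Complex.conj_ofReal]
      simp [hD, conjTranspose_mul, star_eq_conjTranspose, diagonal_conjTranspose, h1,
        Matrix.mul_assoc]
    set pinv : Matrix (Fin m) (Fin m) ℂ := D (fun i => (e i)⁻¹) with hpinv
    set C : Matrix (Fin m) (Fin n) ℂ := pinv * ω with hC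
    have hCconj : Cᴴ = ωᴴ * pinv := by
      rw [hC, conjTranspose_mul, hpinv, hDherm]
    -- ω * Cᴴ = H
    have hωC : ω * Cᴴ = H := by
      rw [hCconj, ← Matrix.mul_assoc, ← hHH, hspec, hpinv, Matrix.mul_assoc, hDmul, hDmul]
      refine congrArg D (funext fun i => ?_)
      rcases eq_or_ne (e i) 0 with h | h
      · simp [h]
      · field_simp
    -- C * ωᴴ = H
    have hCω : C * ωᴴ = H := by
      rw [hC, Matrix.mul_assoc, ← hHH, hspec, hpinv, ← Matrix.mul_assoc, hDmul, hDmul]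
      refine congrArg D (funext fun i => ?_)
      rcases eq_or_ne (e i) 0 with h | h
      · simp [h]
      · field_simp
    set P : Matrix (Fin n) (Fin n) ℂ := Cᴴ * C with hP
    have hPherm : Pᴴ = P := by
      rw [hP, conjTranspose_mul, conjTranspose_conjTranspose]
    -- key : pinv * pinv * (ω * ωᴴ) * (pinv * pinv) = pinv * pinv
    have key : pinv * (pinv * (ω * (ωᴴ * (pinv * pinv)))) = pinv * pinv := by
      have : pinv * pinv * (ω * ωᴴ) * (pinv * pinv) = pinv * pinv := by
        rw [← hHH, hspec, hpinv, hDmul, hDmul, hDmul, hDmul]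
        refine congrArg D (funext fun i => ?_)
        rcases eq_or_ne (e i) 0 with h | h
        · simp [h]
        · field_simp
      simpa only [Matrix.mul_assoc] using this
    have hPP : P * P = P := by
      have h := congrArg (fun X : Matrix (Fin m) (Fin m) ℂ => ωᴴ * (X * ω)) key
      simp only [Matrix.mul_assoc] at h
      calc P * P = ωᴴ * (pinv * (pinv * (ω * (ωᴴ * (pinv * (pinv * ω)))))) := by
            rw [hP, hCconj, hC]; simp only [Matrix.mul_assoc]
        _ = ωᴴ * (pinv * (pinv * ω)) := h
        _ = P := by rw [hP, hCconj, hC]; simp only [Matrix.mul_assoc]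
    -- Q = 1 - P is PSD
    set Q : Matrix (Fin n) (Fin n) ℂ := 1 - P with hQ
    have hQeq : Q = Qᴴ * Q := by
      rw [hQ, conjTranspose_sub, conjTranspose_one, hPherm]
      simp only [Matrix.sub_mul, Matrix.mul_sub, Matrix.one_mul, Matrix.mul_one]
      rw [hPP]
      abel
    have hQpsd : Q.PosSemidef := hQeq ▸ posSemidef_conjTranspose_mul_self Q
    -- B is PSD
    have hB : B.PosSemidef := by
      have h := hpsd.submatrix Sum.inr
      have heq : (fromBlocks A ω ωᴴ B).submatrix (Sum.inr : Fin n → Fin m ⊕ Fin n) Sum.inr = B := by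
        ext i j; simp [fromBlocks]
      rwa [heq] at h
    have hA : A.PosSemidef := by
      have h := hpsd.submatrix Sum.inl
      have heq : (fromBlocks A ω ωᴴ B).submatrix (Sum.inl : Fin m → Fin m ⊕ Fin n) Sum.inl = A := by
        ext i j; simp [fromBlocks]
      rwa [heq] at h
    -- 0 ≤ tr (B * Q)
    have htrBQ : 0 ≤ (B * Q).trace := by
      set S := hB.sqrt with hS
      have hSS : S * S = B := hB.sqrt_mul_self
      have hSherm : Sᴴ = S := hB.posSemidef_sqrt.1
      have h1 : (B * Q).trace = (S * Q * Sᴴ).trace := by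
        rw [hSherm, ← hSS, trace_mul_cycle S Q S]
      rw [h1]
      exact trace_nonneg_of_psd (hQpsd.mul_mul_conjTranspose_same S)
    -- block conjugation inequality
    set Y : Matrix (Fin m ⊕ Fin n) (Fin m ⊕ Fin n) ℂ := fromBlocks 1 (-C) 0 0 with hY
    have hYpsd := hpsd.mul_mul_conjTranspose_same Y
    have hblk : Y * fromBlocks A ω ωᴴ B * Yᴴ =
        fromBlocks (A - C * ωᴴ - (ω - C * B) * Cᴴ) 0 0 0 := by
      rw [hY, fromBlocks_conjTranspose, fromBlocks_multiply, fromBlocks_multiply]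
      congr 1 <;> simp [Matrix.sub_mul, Matrix.mul_sub, Matrix.neg_mul, Matrix.mul_neg,
        conjTranspose_neg, sub_eq_add_neg]
    have ineq1 : 0 ≤ A.trace - H.trace - (H.trace - (B * P).trace) := by
      have h0 := trace_nonneg_of_psd hYpsd
      rw [hblk, trace_fromBlocks', trace_zero, add_zero, trace_sub, trace_sub, hCω,
        Matrix.sub_mul, trace_sub, hωC] at h0
      have hCBC : (C * B * Cᴴ).trace = (B * P).trace := by
        rw [trace_mul_cycle, ← Matrix.mul_assoc, Matrix.mul_assoc Cᴴ pinv ω, ← hC, ← hP,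
          trace_mul_comm]
      rwa [hCBC] at h0
    have ineq2 : 0 ≤ B.trace - (B * P).trace := by
      have : (B * Q).trace = B.trace - (B * P).trace := by
        rw [hQ, Matrix.mul_sub, Matrix.mul_one, trace_sub]
      rwa [this] at htrBQ
    have hsum : 0 ≤ A.trace + B.trace - 2 * H.trace := by
      have h := add_nonneg ineq1 ineq2
      convert h using 1
      ring
    have htrΩ : A.trace + B.trace = ((2 * R : ℝ) : ℂ) := by
      rw [← trace_fromBlocks' A ω ωᴴ B]
      exact htr
    have hfin : 2 * H.trace ≤ ((2 * R : ℝ) : ℂ) := by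
      have := sub_nonneg.mp hsum
      rwa [htrΩ] at this
    have hre := (Complex.le_def.mp hfin).1
    have : 2 * H.trace.re ≤ 2 * R := by
      simpa [Complex.mul_re] using hre
    have hgoal : traceNorm m n ω = H.trace.re := rfl
    rw [hgoal]
    linarith
  · -- rank
    have key : ω = ((1 : Matrix (Fin m ⊕ Fin n) (Fin m ⊕ Fin n) ℂ).submatrix Sum.inl id) *
        ((fromBlocks A ω ωᴴ B) *
          ((1 : Matrix (Fin m ⊕ Fin n) (Fin m ⊕ Fin n) ℂ).submatrix id Sum.inr)) := by
      ext i j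
      simp [mul_apply, one_apply, Fintype.sum_sum_type, fromBlocks]
    calc ω.rank = _ := congrArg Matrix.rank key
      _ ≤ ((fromBlocks A ω ωᴴ B) *
          ((1 : Matrix (Fin m ⊕ Fin n) (Fin m ⊕ Fin n) ℂ).submatrix id Sum.inr)).rank :=
        rank_mul_le_right _ _
      _ ≤ (fromBlocks A ω ωᴴ B).rank := rank_mul_le_left _ _
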